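/- There exists a constant K > 0 such that for every multi-index α ∈ ℕ³, all indices i, j ∈ {1,2,3}, and every x ∈ ℝ³ \ {0}, one has |∂^α (x_i x_j / |x|³)| ≤ K^{|α|} |α|! / |x|^{1+|α|}. -/

import Mathlib

/-- Iterated partial derivative of a scalar function on `ℝ³` along a list of coordinate
directions. -/
noncomputable def pderivList :
    List (Fin 3) → (EuclideanSpace ℝ (Fin 3) → ℝ) → (EuclideanSpace ℝ (Fin 3) → ℝ)
  | [], f => f
  | (i :: L), f => fun x => fderiv ℝ (pderivList L f) x (EuclideanSpace.single i 1)

/-- The partial derivative `∂^α` for a multi-index `α ∈ ℕ³`. -/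
noncomputable def multiDeriv (α : Fin 3 → ℕ) (f : EuclideanSpace ℝ (Fin 3) → ℝ) :
    EuclideanSpace ℝ (Fin 3) → ℝ :=
  pderivList ((List.finRange 3).flatMap fun i => List.replicate (α i) i) f


open scoped RealInnerProductSpace

local notation "E3" => EuclideanSpace ℝ (Fin 3)


/-- monomial: product of coordinates indexed by a list -/
def myMono (L : List (Fin 3)) (x : E3) : ℝ := (L.map fun t => x t).prod

/-- formal derivative of the monomial as a CLM -/
noncomputable def myDmono : List (Fin 3) → E3 → (E3 →L[ℝ] ℝ)
  | [], _ => 0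
  | a :: L, x => myMono L x • EuclideanSpace.proj a + x a • myDmono L x

/-- list of monomial lists obtained by removing one occurrence of `k` -/
def deriva (k : Fin 3) : List (Fin 3) → List (List (Fin 3))
  | [] => []
  | a :: L => (if a = k then [L] else []) ++ (deriva k L).map (a :: ·)

lemma hasFDerivAt_myMono (L : List (Fin 3)) (x : E3) :
    HasFDerivAt (myMono L) (myDmono L x) x := by
  induction L with
  | nil =>
      have e : myMono [] = fun _ => (1:ℝ) := by funext y; simp [myMono]
      rw [e]; simpa [myDmono] using hasFDerivAt_const (1:ℝ) x
  | cons a L ih =>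
      have h1 : HasFDerivAt (fun y : E3 => y a) (EuclideanSpace.proj a (𝕜 := ℝ)) x :=
        (EuclideanSpace.proj a (𝕜 := ℝ)).hasFDerivAt
      have := h1.mul ih
      have e : myMono (a :: L) = fun y => y a * myMono L y := by funext y; simp [myMono]
      rw [e, show myDmono (a :: L) x = x a • myDmono L x + myMono L x • EuclideanSpace.proj a from by
        rw [myDmono, add_comm]]
      exact this

lemma myMono_cons (a : Fin 3) (L : List (Fin 3)) (x : E3) :
    myMono (a :: L) x = x a * myMono L x := by simp [myMono]

lemma myDmono_apply (L : List (Fin 3)) (x : E3) (k : Fin 3) :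
    myDmono L x (EuclideanSpace.single k 1) =
      ((deriva k L).map fun L' => myMono L' x).sum := by
  induction L with
  | nil => simp [myDmono, deriva]
  | cons a L ih =>
      simp only [myDmono, deriva, ContinuousLinearMap.add_apply,
        ContinuousLinearMap.smul_apply, List.map_append, List.sum_append, List.map_map]
      rw [ih]
      have h1 : (EuclideanSpace.proj a (𝕜 := ℝ)) (EuclideanSpace.single k 1)
          = if a = k then 1 else 0 := by
        simp [PiLp.proj_apply, EuclideanSpace.single_apply, eq_comm]
      have h3 : (List.map ((fun L' => myMono L' x) ∘ fun l => a :: l) (deriva k L)).sum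
          = x a * ((deriva k L).map fun L' => myMono L' x).sum := by
        induction deriva k L with
        | nil => simp
        | cons b l ihh =>
            simp only [List.map_cons, List.sum_cons, Function.comp_apply, myMono_cons, ihh]
            ring
      rw [h1, h3]
      by_cases h : a = k <;> simp [h, smul_eq_mul] <;> ring

lemma deriva_length_le (k : Fin 3) (L : List (Fin 3)) :
    (deriva k L).length ≤ L.length := by
  induction L with
  | nil => simp [deriva]
  | cons a L ih =>
      by_cases h : a = k <;> simp [deriva, h] <;> omega

lemma deriva_mem_length (k : Fin 3) (L : List (Fin 3)) {L' : List (Fin 3)}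
    (h : L' ∈ deriva k L) : L'.length + 1 = L.length := by
  induction L generalizing L' with
  | nil => simp [deriva] at h
  | cons a L ih =>
      simp only [deriva, List.mem_append, List.mem_map] at h
      rcases h with h | ⟨l, hl, rfl⟩
      · by_cases hak : a = k <;> simp [hak] at h
        subst h; simp
      · simpa using ih hl

lemma abs_myMono_le (L : List (Fin 3)) (x : E3) :
    |myMono L x| ≤ ‖x‖ ^ L.length := by
  induction L with
  | nil => simp [myMono]
  | cons a L ih =>
      have hxa : |x a| ≤ ‖x‖ := by
        have := abs_real_inner_le_norm x (EuclideanSpace.single a 1)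
        simpa [EuclideanSpace.inner_single_right] using this
      calc |myMono (a :: L) x| = |x a| * |myMono L x| := by simp [myMono, abs_mul]
        _ ≤ ‖x‖ * ‖x‖ ^ L.length :=
            mul_le_mul hxa ih (abs_nonneg _) (norm_nonneg _)
        _ = ‖x‖ ^ (a :: L).length := by rw [List.length_cons]; ring


lemma hasFDerivAt_mynorm (x : E3) (hx : x ≠ 0) :
    ∃ ψ : E3 →L[ℝ] ℝ, HasFDerivAt (fun y : E3 => ‖y‖) ψ x ∧
      ∀ k, ψ (EuclideanSpace.single k 1) = x k / ‖x‖ := by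
  have hsq : HasFDerivAt (fun y : E3 => ‖y‖ ^ 2) (2 • (innerSL ℝ x)) x := by
    simpa using (hasFDerivAt_id x).norm_sq
  have hx2 : ‖x‖ ^ 2 ≠ 0 := pow_ne_zero _ (norm_ne_zero_iff.mpr hx)
  have hsqrt : HasDerivAt Real.sqrt (1 / (2 * Real.sqrt (‖x‖ ^ 2))) (‖x‖ ^ 2) :=
    Real.hasDerivAt_sqrt hx2
  have hcomp := hsqrt.comp_hasFDerivAt x hsq
  have hfun : (fun y : E3 => Real.sqrt (‖y‖ ^ 2)) = fun y : E3 => ‖y‖ := by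
    funext y; rw [Real.sqrt_sq (norm_nonneg y)]
  refine ⟨_, by rw [← hfun]; exact hcomp, fun k => ?_⟩
  rw [Real.sqrt_sq (norm_nonneg x)]
  have : ⟪x, EuclideanSpace.single k 1⟫ = x k := by
    simp [EuclideanSpace.inner_single_right]
  simp [this, ContinuousLinearMap.smul_apply, innerSL_apply_apply]
  field_simp

abbrev Term := ℝ × List (Fin 3) × ℕ

noncomputable def tval (t : Term) (x : E3) : ℝ := t.1 * myMono t.2.1 x / ‖x‖ ^ t.2.2

noncomputable def Dval (D : List Term) (x : E3) : ℝ := (D.map fun t => tval t x).sum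

def stepT (k : Fin 3) (t : Term) : List Term :=
  ((deriva k t.2.1).map fun L' => (t.1, L', t.2.2)) ++ [(-(t.1 * t.2.2), t.2.1 ++ [k], t.2.2 + 2)]

def stepD (k : Fin 3) (D : List Term) : List Term := D.flatMap (stepT k)

lemma sum_map_div (l : List (List (Fin 3))) (f : List (Fin 3) → ℝ) (c d : ℝ) :
    (l.map fun L' => c * f L' / d).sum = c * (l.map f).sum / d := by
  induction l with
  | nil => simp
  | cons b l ih => simp only [List.map_cons, List.sum_cons, ih]; ring

lemma hasFDerivAt_tval (t : Term) (hp : 1 ≤ t.2.2) (x : E3) (hx : x ≠ 0) :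
    ∃ φ : E3 →L[ℝ] ℝ, HasFDerivAt (tval t) φ x ∧
      ∀ k, φ (EuclideanSpace.single k 1) = Dval (stepT k t) x := by
  obtain ⟨c, L, p⟩ := t
  replace hp : 1 ≤ p := hp
  obtain ⟨q, rfl⟩ : ∃ q, p = q + 1 := ⟨p - 1, by omega⟩
  obtain ⟨ψ, hψ, hψk⟩ := hasFDerivAt_mynorm x hx
  have hxn : ‖x‖ ≠ 0 := norm_ne_zero_iff.mpr hx
  have hpow : HasFDerivAt (fun y : E3 => ‖y‖ ^ (q + 1))
      ((((q:ℝ) + 1) * ‖x‖ ^ q) • ψ) x := by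
    have := (hasDerivAt_pow (q + 1) ‖x‖).comp_hasFDerivAt x hψ
    simpa [Function.comp_def] using this
  have hD : ‖x‖ ^ (q+1) ≠ 0 := pow_ne_zero _ hxn
  have hinv : HasFDerivAt (fun y : E3 => (‖y‖ ^ (q + 1))⁻¹)
      ((-((‖x‖ ^ (q+1)) ^ 2)⁻¹) • ((((q:ℝ) + 1) * ‖x‖ ^ q) • ψ)) x := by
    have := (hasDerivAt_inv hD).comp_hasFDerivAt x hpow
    exact this
  have hnum : HasFDerivAt (fun y : E3 => c * myMono L y) (c • myDmono L x) x :=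
    (hasFDerivAt_myMono L x).const_mul c
  have hmul := hnum.mul hinv
  refine ⟨(c * myMono L x) • -((‖x‖ ^ (q + 1)) ^ 2)⁻¹ • ((((q:ℝ)) + 1) * ‖x‖ ^ q) • ψ
    + (‖x‖ ^ (q + 1))⁻¹ • c • myDmono L x, ?_, fun k => ?_⟩
  · have : (fun y : E3 => c * myMono L y * (‖y‖ ^ (q+1))⁻¹) = tval (c, L, q+1) := by
      funext y; simp [tval, div_eq_mul_inv]
    rw [← this]; exact hmul
  · have hS := myDmono_apply L x k
    simp only [ContinuousLinearMap.add_apply, ContinuousLinearMap.smul_apply, hS, hψk,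
      smul_eq_mul]
    rw [Dval, stepT]
    simp only [List.map_append, List.sum_append, List.map_map, List.map_cons, List.map_nil,
      List.sum_cons, List.sum_nil, add_zero]
    have h1 : (List.map ((fun t => tval t x) ∘ fun L' => (c, L', q+1)) (deriva k L)).sum
        = c * ((deriva k L).map fun L' => myMono L' x).sum / ‖x‖ ^ (q+1) := by
      have := sum_map_div (deriva k L) (fun L' => myMono L' x) c (‖x‖ ^ (q+1))
      rw [← this]; congr 1
    rw [h1]
    have hmono_app : myMono (L ++ [k]) x = myMono L x * x k := by
      simp [myMono]
    rw [tval]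
    simp only [hmono_app]
    push_cast
    field_simp
    ring

/-! ### iteration -/

noncomputable def iterStep : List (Fin 3) → List Term → List Term
  | [], D => D
  | k :: Ls, D => stepD k (iterStep Ls D)

def PosP (D : List Term) : Prop := ∀ t ∈ D, 1 ≤ t.2.2

lemma Dval_append (A B : List Term) (x : E3) : Dval (A ++ B) x = Dval A x + Dval B x := by
  simp [Dval]

lemma PosP_stepD (k : Fin 3) {D : List Term} (h : PosP D) : PosP (stepD k D) := by
  intro t' ht'
  simp only [stepD, List.mem_flatMap] at ht'
  obtain ⟨t, ht, ht'⟩ := ht'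
  have := h t ht
  simp only [stepT, List.mem_append, List.mem_map, List.mem_singleton] at ht'
  rcases ht' with ⟨L', _, rfl⟩ | rfl <;> simp <;> omega

lemma hasFDerivAt_Dval (D : List Term) (hD : PosP D) (x : E3) (hx : x ≠ 0) :
    ∃ φ : E3 →L[ℝ] ℝ, HasFDerivAt (Dval D) φ x ∧
      ∀ k, φ (EuclideanSpace.single k 1) = Dval (stepD k D) x := by
  induction D with
  | nil =>
      refine ⟨0, ?_, fun k => by simp [stepD, Dval]⟩
      have : Dval [] = fun _ : E3 => (0:ℝ) := by funext y; simp [Dval]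
      rw [this]; exact hasFDerivAt_const 0 x
  | cons t D ih =>
      obtain ⟨φ₁, h1, h1k⟩ := hasFDerivAt_tval t (hD t (by simp)) x hx
      obtain ⟨φ₂, h2, h2k⟩ := ih (fun s hs => hD s (by simp [hs]))
      refine ⟨φ₁ + φ₂, ?_, fun k => ?_⟩
      · have : Dval (t :: D) = fun y => tval t y + Dval D y := by
          funext y; simp [Dval]
        rw [this]; exact h1.add h2
      · have : stepD k (t :: D) = stepT k t ++ stepD k D := by simp [stepD]
        rw [this, Dval_append]
        simp [h1k, h2k]

lemma PosP_iterStep (Ls : List (Fin 3)) {D : List Term} (h : PosP D) :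
    PosP (iterStep Ls D) := by
  induction Ls with
  | nil => exact h
  | cons k Ls ih => exact PosP_stepD k ih

lemma pderiv_eval (Ls : List (Fin 3)) (D : List Term) (hD : PosP D) :
    ∀ x : E3, x ≠ 0 → pderivList Ls (Dval D) x = Dval (iterStep Ls D) x := by
  induction Ls with
  | nil => intro x _; rfl
  | cons k Ls ih =>
      intro x hx
      have hopen : {y : E3 | y ≠ 0} ∈ nhds x := by
        have : IsOpen {y : E3 | y ≠ 0} := isOpen_compl_singleton
        exact this.mem_nhds hx
      have hEq : pderivList Ls (Dval D) =ᶠ[nhds x] Dval (iterStep Ls D) :=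
        Filter.eventuallyEq_of_mem hopen (fun y hy => ih y hy)
      show fderiv ℝ (pderivList Ls (Dval D)) x (EuclideanSpace.single k 1) = _
      rw [hEq.fderiv_eq]
      obtain ⟨φ, hφ, hk⟩ := hasFDerivAt_Dval (iterStep Ls D) (PosP_iterStep Ls hD) x hx
      rw [hφ.fderiv]
      exact hk k

/-! ### invariants -/

def InvP (n : ℕ) (D : List Term) : Prop :=
  ∀ t ∈ D, t.2.2 = t.2.1.length + 1 + n ∧ t.2.1.length ≤ n + 2

lemma InvP_stepD (k : Fin 3) {n : ℕ} {D : List Term} (h : InvP n D) :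
    InvP (n + 1) (stepD k D) := by
  intro t' ht'
  simp only [stepD, List.mem_flatMap] at ht'
  obtain ⟨t, ht, ht'⟩ := ht'
  obtain ⟨hp, hl⟩ := h t ht
  simp only [stepT, List.mem_append, List.mem_map, List.mem_singleton] at ht'
  rcases ht' with ⟨L', hL', rfl⟩ | rfl
  · have := deriva_mem_length k t.2.1 hL'
    constructor <;> simp <;> omega
  · constructor <;> simp <;> omega

noncomputable def W (D : List Term) : ℝ := (D.map fun t => |t.1|).sum

lemma W_nonneg (D : List Term) : 0 ≤ W D := by
  induction D with
  | nil => simp [W]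
  | cons t D ih => simp only [W, List.map_cons, List.sum_cons] at *; positivity

lemma W_stepD (k : Fin 3) {n : ℕ} {D : List Term} (h : InvP n D) :
    W (stepD k D) ≤ (3 * n + 5) * W D := by
  induction D with
  | nil => simp [stepD, W]
  | cons t D ih =>
      have hstep : stepD k (t :: D) = stepT k t ++ stepD k D := by simp [stepD]
      have hW : W (stepT k t ++ stepD k D) = W (stepT k t) + W (stepD k D) := by
        simp [W]
      obtain ⟨hp, hl⟩ := h t (by simp)
      have hT : W (stepT k t) ≤ (3 * n + 5) * |t.1| := by
        have hconst : (List.map ((fun s : Term => |s.1|) ∘ fun L' => (t.1, L', t.2.2))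
              (deriva k t.2.1)).sum = ((deriva k t.2.1).length : ℝ) * |t.1| := by
          rw [show ((fun s : Term => |s.1|) ∘ fun L' : List (Fin 3) => (t.1, L', t.2.2))
              = fun _ => |t.1| from rfl, List.map_const', List.sum_replicate, nsmul_eq_mul]
        have hlen : ((deriva k t.2.1).length : ℝ) ≤ (t.2.1.length : ℝ) := by
          exact_mod_cast deriva_length_le k t.2.1
        have : W (stepT k t) = ((deriva k t.2.1).length : ℝ) * |t.1| + |t.1 * t.2.2| := by
          simp [W, stepT, List.map_map, Function.comp, hconst]
        rw [this, abs_mul]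
        have habs : |(t.2.2 : ℝ)| = (t.2.2 : ℝ) := abs_of_nonneg (by positivity)
        rw [habs]
        have h1 : (t.2.1.length : ℝ) + (t.2.2 : ℝ) ≤ 3 * n + 5 := by
          rw [hp]; push_cast; have : (t.2.1.length : ℝ) ≤ n + 2 := by exact_mod_cast hl
          linarith
        nlinarith [abs_nonneg t.1, hlen]
      have hrest : W (stepD k D) ≤ (3 * n + 5) * W D :=
        ih (fun s hs => h s (by simp [hs]))
      rw [hstep, hW]
      have : W (t :: D) = |t.1| + W D := by simp [W]
      rw [this]
      linarith

lemma abs_Dval_le {n : ℕ} {D : List Term} (h : InvP n D) (x : E3) (hx : x ≠ 0) :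
    |Dval D x| ≤ W D / ‖x‖ ^ (1 + n) := by
  have hxn : (0:ℝ) < ‖x‖ := norm_pos_iff.mpr hx
  induction D with
  | nil =>
      simp only [Dval, W, List.map_nil, List.sum_nil, abs_zero]
      positivity
  | cons t D ih =>
      have h1 : |tval t x| ≤ |t.1| / ‖x‖ ^ (1 + n) := by
        obtain ⟨hp, _⟩ := h t (by simp)
        have hM := abs_myMono_le t.2.1 x
        have : |tval t x| = |t.1| * |myMono t.2.1 x| / ‖x‖ ^ t.2.2 := by
          rw [tval, abs_div, abs_mul, abs_of_nonneg (by positivity : (0:ℝ) ≤ ‖x‖ ^ t.2.2)]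
        rw [this, hp]
        rw [show t.2.1.length + 1 + n = t.2.1.length + (1 + n) by ring, pow_add]
        rw [div_le_div_iff₀ (by positivity) (by positivity)]
        calc |t.1| * |myMono t.2.1 x| * ‖x‖ ^ (1 + n)
            ≤ |t.1| * ‖x‖ ^ t.2.1.length * ‖x‖ ^ (1 + n) := by
              have := mul_le_mul_of_nonneg_left hM (abs_nonneg t.1)
              nlinarith [pow_pos hxn (1 + n)]
          _ = |t.1| * (‖x‖ ^ t.2.1.length * ‖x‖ ^ (1 + n)) := by ring
      have h2 : |Dval D x| ≤ W D / ‖x‖ ^ (1 + n) := ih (fun s hs => h s (by simp [hs]))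
      have : Dval (t :: D) x = tval t x + Dval D x := by simp [Dval]
      rw [this]
      have : W (t :: D) = |t.1| + W D := by simp [W]
      rw [this, add_div]
      exact (abs_add_le _ _).trans (by linarith)

lemma InvP_iterStep (Ls : List (Fin 3)) {D : List Term} (h : InvP 0 D) :
    InvP Ls.length (iterStep Ls D) := by
  induction Ls with
  | nil => exact h
  | cons k Ls ih =>
      have := InvP_stepD k ih
      simpa [Nat.add_comm, iterStep] using this

lemma W_iterStep (Ls : List (Fin 3)) {D : List Term} (h : InvP 0 D) (hW : W D ≤ 1) :
    W (iterStep Ls D) ≤ 5 ^ Ls.length * (Nat.factorial Ls.length) := by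
  induction Ls with
  | nil => simpa [iterStep] using hW
  | cons k Ls ih =>
      have hinv := InvP_iterStep Ls h
      have hstep := W_stepD k hinv
      have hWn := W_nonneg (iterStep Ls D)
      have hfac : (0:ℝ) < Nat.factorial Ls.length := by positivity
      calc W (iterStep (k :: Ls) D) = W (stepD k (iterStep Ls D)) := rfl
        _ ≤ (3 * Ls.length + 5) * W (iterStep Ls D) := hstep
        _ ≤ (3 * Ls.length + 5) * (5 ^ Ls.length * Nat.factorial Ls.length) := by
            apply mul_le_mul_of_nonneg_left ih (by positivity)
        _ ≤ 5 ^ (Ls.length + 1) * Nat.factorial (Ls.length + 1) := by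
            rw [Nat.factorial_succ, pow_succ]
            push_cast
            nlinarith [pow_pos (by norm_num : (0:ℝ) < 5) Ls.length]
        _ = 5 ^ (k :: Ls).length * Nat.factorial (k :: Ls).length := by simp


/-- There exists `K > 0` such that for every multi-index `α ∈ ℕ³`, all `i, j` and every
`x ≠ 0`, `|∂^α (x_i x_j / |x|³)| ≤ K^{|α|} |α|! / |x|^{1+|α|}`. -/
theorem deriv_xixj_inv_norm_cubed_bound :
    ∃ K : ℝ, 0 < K ∧ ∀ (α : Fin 3 → ℕ) (i j : Fin 3) (x : EuclideanSpace ℝ (Fin 3)), x ≠ 0 →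
      |multiDeriv α (fun y => y i * y j / ‖y‖ ^ 3) x| ≤
        K ^ (∑ k, α k) * Nat.factorial (∑ k, α k) / ‖x‖ ^ (1 + ∑ k, α k) := by
  refine ⟨5, by norm_num, fun α i j x hx => ?_⟩
  set Ls : List (Fin 3) := (List.finRange 3).flatMap fun i => List.replicate (α i) i with hLs
  have hlen : Ls.length = ∑ k, α k := by
    rw [hLs]
    simp only [List.length_flatMap, Fin.sum_univ_def]
    congr 1
    apply List.map_congr_left
    intro a _
    simp
  set D₀ : List Term := [(1, [i, j], 3)] with hD₀
  have hfeq : (fun y : E3 => y i * y j / ‖y‖ ^ 3) = Dval D₀ := by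
    funext y; simp [Dval, tval, myMono, hD₀]
  have hPos : PosP D₀ := by intro t ht; simp [hD₀] at ht; simp [ht]
  have hInv : InvP 0 D₀ := by intro t ht; simp [hD₀] at ht; simp [ht]
  have hWD : W D₀ ≤ 1 := by simp [W, hD₀]
  have heval : multiDeriv α (fun y : E3 => y i * y j / ‖y‖ ^ 3) x
      = Dval (iterStep Ls D₀) x := by
    rw [multiDeriv, hfeq, ← hLs]
    exact pderiv_eval Ls D₀ hPos x hx
  rw [heval]
  have h1 := abs_Dval_le (InvP_iterStep Ls hInv) x hx
  have h2 := W_iterStep Ls hInv hWD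
  rw [hlen] at h1 h2
  refine h1.trans ?_
  have hxn : (0:ℝ) < ‖x‖ := norm_pos_iff.mpr hx
  gcongr
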